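/- The bound ⌈s⌉ in the partition lemma is tight: for every integer t ≥ 1 and all sufficiently small ε > 0 and δ > 0 (specifically, whenever (2t−2)·ε + δ ≤ 1), setting m = 2t − 1, p_1 = p_2 = ⋯ = p_{m−1} = 1/2 + ε and p_m = δ (so that s = Σ_{i=1}^m p_i satisfies t − 1 < s ≤ t, i.e., ⌈s⌉ = t), every partition of {1,…,m} into sets B such that Σ_{k ∈ B, k ≠ i} p_k ≤ 1 for every B in the partition and every i ∈ B must consist of at least t sets. -/

import Mathlib

open MeasureTheory ProbabilityTheory Set
open scoped NNReal ENNReal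

noncomputable section

/-- The space of buyer types for `n` items: vectors in `[0,∞)^n`. -/
abbrev BuyerType (n : ℕ) := Fin n → ℝ≥0

/-- An `n`-item outcome: allocation probabilities together with a price. -/
abbrev Outcome (n : ℕ) := (Fin n → ℝ) × ℝ

/-- An outcome is valid if all allocation probabilities are in `[0,1]` and the price is `≥ 0`. -/
def ValidOutcome {n : ℕ} (e : Outcome n) : Prop :=
  (∀ i, 0 ≤ e.1 i ∧ e.1 i ≤ 1) ∧ 0 ≤ e.2

/-- The zero entry `(0,…,0;0)`. -/
def zeroEntry (n : ℕ) : Outcome n := (fun _ => 0, 0)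

/-- The utility of buyer type `v` from outcome `e`. -/
def utility {n : ℕ} (e : Outcome n) (v : BuyerType n) : ℝ :=
  (∑ i, e.1 i * (v i : ℝ)) - e.2

/-- An individually rational menu: a set of valid outcomes containing the zero entry. -/
def IRMenu {n : ℕ} (M : Set (Outcome n)) : Prop :=
  (∀ e ∈ M, ValidOutcome e) ∧ zeroEntry n ∈ M

/-- A choice function for menu `M`: for every buyer type it picks a utility-maximizing
entry of maximal price among the utility-maximizing entries, with Borel-measurable price. -/
def IsChoice {n : ℕ} (M : Set (Outcome n)) (t : BuyerType n → Outcome n) : Prop :=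
  (∀ v, t v ∈ M) ∧
  (∀ v, ∀ e ∈ M, utility e v ≤ utility (t v) v) ∧
  (∀ v, ∀ e ∈ M, utility e v = utility (t v) v → e.2 ≤ (t v).2) ∧
  Measurable fun v => (t v).2

/-- The revenue of a menu equipped with choice function `t` from distribution `F`. -/
def revenue {n : ℕ} (t : BuyerType n → Outcome n) (F : Measure (BuyerType n)) : ℝ≥0∞ :=
  ∫⁻ v, ENNReal.ofReal ((t v).2) ∂F

/-- The menu size: the number of entries other than the zero entry. -/
def menuSize {n : ℕ} (M : Set (Outcome n)) : ℕ∞ :=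
  (M \ {zeroEntry n}).encard

/-- The optimal revenue obtainable from `F` by an IR menu with a choice function. -/
def Rev {n : ℕ} (F : Measure (BuyerType n)) : ℝ≥0∞ :=
  ⨆ (Mt : Set (Outcome n) × (BuyerType n → Outcome n))
    (_ : IRMenu Mt.1 ∧ IsChoice Mt.1 Mt.2), revenue Mt.2 F

/-- The optimal revenue obtainable from `F` by an IR menu of menu size at most `C`. -/
def RevC {n : ℕ} (C : ℕ) (F : Measure (BuyerType n)) : ℝ≥0∞ :=
  ⨆ (Mt : Set (Outcome n) × (BuyerType n → Outcome n))
    (_ : IRMenu Mt.1 ∧ IsChoice Mt.1 Mt.2 ∧ menuSize Mt.1 ≤ (C : ℕ∞)),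
    revenue Mt.2 F

/-- Embedding of a single item value as a buyer type for one item. -/
def toOne (x : ℝ≥0) : BuyerType 1 := fun _ => x

/-- The optimal single-item revenue from a value distribution `G` on `[0,∞)`. -/
def Rev1 (G : Measure ℝ≥0) : ℝ≥0∞ := Rev (G.map toOne)

/-- `EU n H`: the set of buyer types with at most one coordinate strictly greater than `H`. -/
def EU (n : ℕ) (H : ℝ) : Set (BuyerType n) :=
  {v | {i : Fin n | H < (v i : ℝ)}.Subsingleton}

/-- A menu is `E`-exclusive if every entry priced above `E` allocates at most one item with
positive probability. -/
def Exclusive {n : ℕ} (E : ℝ) (M : Set (Outcome n)) : Prop :=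
  ∀ e ∈ M, E < e.2 → {i : Fin n | 0 < e.1 i}.Subsingleton


/-- Tightness of the partition lemma. With `m = 2t-1`,
`p_1 = ⋯ = p_{m-1} = 1/2 + ε` and `p_m = δ`, where `(2t-2)·ε + δ ≤ 1`, the sum `s` satisfies
`t-1 < s ≤ t` (so `⌈s⌉ = t`), and every partition of `{1,…,m}` into sets in each of which
removing any single element leaves total at most `1` has at least `t` sets. -/
theorem partition_bound_is_tight
    (t : ℕ) (ht : 1 ≤ t) (ε δ : ℝ) (hε : 0 < ε) (hδ : 0 < δ)
    (hsmall : (2 * (t : ℝ) - 2) * ε + δ ≤ 1)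
    (p : Fin (2 * t - 1) → ℝ)
    (hpdef : p = fun i : Fin (2 * t - 1) =>
      if (i : ℕ) = 2 * t - 2 then δ else 1 / 2 + ε) :
    ((t : ℝ) - 1 < ∑ i, p i ∧ ∑ i, p i ≤ t) ∧
    ∀ P : Finset (Finset (Fin (2 * t - 1))),
      (∀ B ∈ P, B.Nonempty) →
      (∀ B ∈ P, ∀ B' ∈ P, B ≠ B' → Disjoint B B') →
      (∀ i, ∃ B ∈ P, i ∈ B) →
      (∀ B ∈ P, ∀ i ∈ B, ∑ k ∈ B.erase i, p k ≤ 1) →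
      t ≤ P.card := by
  subst hpdef
  have h2t : 1 ≤ 2 * t := by omega
  have hlt : 2 * t - 2 < 2 * t - 1 := by omega
  set a : Fin (2*t-1) := ⟨2*t-2, hlt⟩ with ha
  have hcast : ((2*t-1 : ℕ) : ℝ) = 2*(t:ℝ) - 1 := by
    rw [Nat.cast_sub h2t]; push_cast; ring
  have ht' : (1:ℝ) ≤ (t:ℝ) := by exact_mod_cast ht
  constructor
  · have hpa : ∀ i : Fin (2*t-1), (if (i:ℕ) = 2*t-2 then δ else 1/2+ε)
        = (1/2+ε) + (if i = a then δ - (1/2+ε) else 0) := by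
      intro i
      by_cases h : i = a
      · have : (i:ℕ) = 2*t-2 := by rw [h]
        rw [if_pos this, if_pos h]; ring
      · have hne : (i:ℕ) ≠ 2*t-2 := fun hc => h (Fin.ext hc)
        simp [h, hne]
    have hsum : ∑ i : Fin (2*t-1), (if (i:ℕ) = 2*t-2 then δ else 1/2+ε)
        = ((2*t-1 : ℕ) : ℝ) * (1/2+ε) + (δ - (1/2+ε)) := by
      simp_rw [hpa]
      rw [Finset.sum_add_distrib, Finset.sum_const, Finset.sum_ite_eq' Finset.univ a]
      simp [Finset.card_univ, nsmul_eq_mul]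
      ring
    simp only [hsum, hcast]
    constructor <;> nlinarith
  · intro P hne hdisj hcover hbound
    have hcard2 : ∀ B ∈ P, B.card ≤ 2 := by
      intro B hB
      by_contra h
      push_neg at h
      obtain ⟨i, hi, hnl⟩ : ∃ i ∈ B, a ∉ B.erase i := by
        by_cases hm : a ∈ B
        · exact ⟨a, hm, Finset.notMem_erase a B⟩
        · obtain ⟨i, hi⟩ := hne B hB
          exact ⟨i, hi, fun hc => hm (Finset.mem_of_mem_erase hc)⟩
      have hsum := hbound B hB i hi
      have hconst : ∀ k ∈ B.erase i,
          (if (k:ℕ) = 2*t-2 then δ else 1/2+ε) = 1/2+ε := by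
        intro k hk
        have hne' : (k:ℕ) ≠ 2*t-2 := fun hc => hnl ((Fin.ext hc : k = a) ▸ hk)
        simp [hne']
      rw [Finset.sum_congr rfl hconst, Finset.sum_const, nsmul_eq_mul] at hsum
      have hcardE : 2 ≤ (B.erase i).card := by
        rw [Finset.card_erase_of_mem hi]; omega
      have hle : (2:ℝ) * (1/2+ε) ≤ (B.erase i).card * (1/2+ε) := by
        apply mul_le_mul_of_nonneg_right _ (by linarith)
        exact_mod_cast hcardE
      linarith
    have hcover' : Finset.univ ⊆ P.biUnion id := by
      intro i _
      obtain ⟨B, hB, hiB⟩ := hcover i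
      exact Finset.mem_biUnion.2 ⟨B, hB, hiB⟩
    have h1 : 2*t-1 ≤ ∑ B ∈ P, B.card := by
      calc 2*t-1 = (Finset.univ : Finset (Fin (2*t-1))).card := by
            simp [Finset.card_univ]
        _ ≤ (P.biUnion id).card := Finset.card_le_card hcover'
        _ ≤ ∑ B ∈ P, (id B).card := Finset.card_biUnion_le
    have h2 : ∑ B ∈ P, B.card ≤ 2 * P.card := by
      calc ∑ B ∈ P, B.card ≤ ∑ _B ∈ P, 2 := Finset.sum_le_sum hcard2
        _ = 2 * P.card := by rw [Finset.sum_const]; ring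
    omega

end
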